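/- Let X be a real random variable with mean μ, variance σ², and E[(X-μ)⁴] ≤ C₄ σ⁴. Then for any event A with P(A) = 1 - ε, 0 < ε ≤ 1/2: -√(C₄ ε) σ² ≤ E[(X-μ)² | A] - σ² ≤ 2ε σ². -/

import Mathlib

open MeasureTheory ProbabilityTheory

/-- If E[X] = μ, Var X = σ², E[(X-μ)⁴] ≤ C₄ σ⁴, and A is an event with
P(A) = 1 - ε, 0 < ε ≤ 1/2, then -√(C₄ ε) σ² ≤ E[(X-μ)² | A] - σ² ≤ 2ε σ². -/
theorem conditional_second_moment {Ω : Type*} [MeasurableSpace Ω] (μ : Measure Ω)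
    [IsProbabilityMeasure μ]
    (X : Ω → ℝ) (m σ C₄ ε : ℝ) (hC : 0 < C₄) (hσ : 0 ≤ σ)
    (hX1 : Integrable X μ)
    (hX2 : Integrable (fun ω => (X ω - m)^2) μ)
    (hX4 : Integrable (fun ω => (X ω - m)^4) μ)
    (hm : ∫ ω, X ω ∂μ = m)
    (hvar : ∫ ω, (X ω - m)^2 ∂μ = σ^2)
    (h4 : ∫ ω, (X ω - m)^4 ∂μ ≤ C₄ * σ^4)
    (A : Set Ω) (hA : MeasurableSet A) (hε0 : 0 < ε) (hε1 : ε ≤ 1/2)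
    (hPA : μ A = ENNReal.ofReal (1 - ε)) :
    -(Real.sqrt (C₄ * ε)) * σ^2 ≤ (∫ ω, (X ω - m)^2 ∂(μ[|A])) - σ^2 ∧
      (∫ ω, (X ω - m)^2 ∂(μ[|A])) - σ^2 ≤ 2 * ε * σ^2 := by
  have hε1' : (0:ℝ) < 1 - ε := by linarith
  have hYnn : 0 ≤ᵐ[μ] fun ω => (X ω - m)^2 :=
    Filter.Eventually.of_forall fun ω => sq_nonneg _
  -- the conditional integral
  have hI : (∫ ω, (X ω - m)^2 ∂(μ[|A]))
      = (1 - ε)⁻¹ * ∫ ω in A, (X ω - m)^2 ∂μ := by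
    rw [ProbabilityTheory.cond, integral_smul_measure, hPA, ← ENNReal.ofReal_inv_of_pos hε1',
      ENNReal.toReal_ofReal (by positivity), smul_eq_mul]
  set S := ∫ ω in A, (X ω - m)^2 ∂μ with hS
  set T := ∫ ω in Aᶜ, (X ω - m)^2 ∂μ with hT
  have hsplit : S + T = σ^2 := by
    rw [hS, hT, integral_add_compl hA hX2, hvar]
  have hSnn : 0 ≤ S := setIntegral_nonneg hA fun ω _ => sq_nonneg _
  have hTnn : 0 ≤ T := setIntegral_nonneg hA.compl fun ω _ => sq_nonneg _
  have hSle : S ≤ σ^2 := by linarith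
  -- measure of complement
  have hPAc : μ Aᶜ = ENNReal.ofReal ε := by
    rw [measure_compl hA (measure_ne_top _ _), hPA, measure_univ,
      ← ENNReal.ofReal_one, ← ENNReal.ofReal_sub _ (by linarith)]
    norm_num
  -- bound T ≤ √(C₄ ε) σ²
  have hTle : T ≤ Real.sqrt (C₄ * ε) * σ^2 := by
    rcases eq_or_lt_of_le hσ with hσ0 | hσpos
    · have h0 : ∫ ω, (X ω - m)^2 ∂μ = 0 := by rw [hvar, ← hσ0]; ring
      have hZ : (fun ω => (X ω - m)^2) =ᵐ[μ] 0 :=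
        (integral_eq_zero_iff_of_nonneg (fun ω => sq_nonneg _) hX2).mp h0
      have : T = 0 := by
        rw [hT]
        rw [setIntegral_congr_ae hA.compl (hZ.mono fun ω h _ => h)]
        simp
      rw [this]
      positivity
    · -- AM-GM: Y ≤ (t + Y²/t)/2 with t = σ² √(C₄/ε)
      set t : ℝ := σ^2 * Real.sqrt (C₄ / ε) with ht
      have htpos : 0 < t := by
        apply mul_pos (by positivity)
        exact Real.sqrt_pos.mpr (by positivity)
      have hpt : ∀ ω, (X ω - m)^2 ≤ (t + (X ω - m)^4 / t) / 2 := by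
        intro ω
        have hkey : t + (X ω - m)^4 / t - (X ω - m)^2 * 2
            = (t - (X ω - m)^2)^2 / t := by
          field_simp
          ring
        have hnn : 0 ≤ (t - (X ω - m)^2)^2 / t :=
          div_nonneg (sq_nonneg _) htpos.le
        rw [le_div_iff₀ (by norm_num : (0:ℝ) < 2)]
        linarith
      have hint : T ≤ ∫ ω in Aᶜ, (t + (X ω - m)^4 / t) / 2 ∂μ := by
        apply integral_mono_of_nonneg (Filter.Eventually.of_forall fun ω => sq_nonneg _)
        · exact ((integrable_const t).add (hX4.div_const t)).div_const 2 |>.restrict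
        · exact Filter.Eventually.of_forall fun ω => hpt ω
      have hεT : (μ Aᶜ).toReal = ε := by rw [hPAc, ENNReal.toReal_ofReal hε0.le]
      have h4c : ∫ ω in Aᶜ, (X ω - m)^4 ∂μ ≤ C₄ * σ^4 := by
        refine le_trans (setIntegral_le_integral hX4 ?_) h4
        exact Filter.Eventually.of_forall fun ω => by positivity
      have hval : ∫ ω in Aᶜ, (t + (X ω - m)^4 / t) / 2 ∂μ
          = ((μ Aᶜ).toReal * t + (∫ ω in Aᶜ, (X ω - m)^4 ∂μ) / t) / 2 := by
        rw [integral_div, integral_add (integrable_const t).restrict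
          (hX4.div_const t).restrict, integral_const, integral_div, smul_eq_mul,
          measureReal_def, Measure.restrict_apply_univ]
      have hsqrt : ε * t + C₄ * σ^4 / t = 2 * (Real.sqrt (C₄ * ε) * σ^2) := by
        set s : ℝ := Real.sqrt (C₄ / ε) with hsdef
        have hs : 0 < s := Real.sqrt_pos.mpr (by positivity)
        have hsq : s^2 = C₄ / ε := Real.sq_sqrt (by positivity)
        have hC4 : C₄ = s^2 * ε := by
          rw [hsq]; field_simp
        have h1 : Real.sqrt (C₄ * ε) = s * ε := by
          rw [hC4, show s^2 * ε * ε = (s * ε)^2 by ring,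
            Real.sqrt_sq (by positivity)]
        rw [h1, ht, hC4]
        field_simp
        ring
      have : T ≤ (ε * t + C₄ * σ^4 / t) / 2 := by
        calc T ≤ ((μ Aᶜ).toReal * t + (∫ ω in Aᶜ, (X ω - m)^4 ∂μ) / t) / 2 :=
              hval ▸ hint
          _ ≤ (ε * t + C₄ * σ^4 / t) / 2 := by
              rw [hεT]
              have hdiv : (∫ ω in Aᶜ, (X ω - m)^4 ∂μ) / t ≤ C₄ * σ^4 / t := by
                gcongr
              linarith
      rw [hsqrt] at this
      linarith
  constructor
  · -- lower bound: I ≥ S = σ² - T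
    have hIgeS : S ≤ (∫ ω, (X ω - m)^2 ∂(μ[|A])) := by
      rw [hI]
      have hu1 : 1 ≤ (1 - ε)⁻¹ := by
        nlinarith [mul_inv_cancel₀ hε1'.ne',
          mul_nonneg (inv_nonneg.mpr hε1'.le) hε0.le]
      nlinarith [mul_nonneg (sub_nonneg.mpr hu1) hSnn]
    nlinarith
  · rw [hI]
    rw [sub_le_iff_le_add]
    rw [inv_mul_le_iff₀ hε1']
    nlinarith [mul_nonneg (mul_nonneg hε0.le (by linarith : (0:ℝ) ≤ 1 - 2*ε)) (sq_nonneg σ)]
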